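/- For fixed interval constraints (P̌, P̂) on a finite set Q admitting at least one valid distribution, and any value function V : Q → [0,1], the maximum of ∑_q Δ(q) V(q) over valid distributions Δ is attained, and it is attained by the following ordering construction: sort states in decreasing order of V, assign each state its upper bound P̂ greedily until the remaining mass forces lower bounds, i.e., the optimal Δ assigns Δ(q_i) = min(P̂(q_i), 1 − ∑_{j<i} Δ(q_j) − ∑_{j>i} P̌(q_j)) in that order. -/
import Mathlib


open Finset

/-- Cumulative mass assigned by the greedy adversary construction to the first `i`
states (states indexed `0, …, n-1` in decreasing order of value). -/
noncomputable def greedyCum (Ph Pl : ℕ → ℝ) (n : ℕ) : ℕ → ℝ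
  | 0 => 0
  | i + 1 => greedyCum Ph Pl n i +
      min (Ph i) (1 - greedyCum Ph Pl n i - ∑ j ∈ Finset.Ico (i + 1) n, Pl j)

/-- The greedy adversary distribution: `Δ i = min (Ph i) (1 - ∑_{j<i} Δ j - ∑_{j>i} Pl j)`. -/
noncomputable def greedyDist (Ph Pl : ℕ → ℝ) (n : ℕ) (i : ℕ) : ℝ :=
  greedyCum Ph Pl n (i + 1) - greedyCum Ph Pl n i

private lemma abel_sum (V : ℕ → ℝ) :
    ∀ (n : ℕ) (E : ℕ → ℝ), E 0 = 0 → (∀ i, i ≤ n → 0 ≤ E i) →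
      (∀ i, i + 1 < n → V (i + 1) ≤ V i) →
      E n * V (n - 1) ≤ ∑ i ∈ Finset.range n, (E (i + 1) - E i) * V i := by
  intro n
  induction n with
  | zero => intro E hE0 _ _; simp [hE0]
  | succ n ih =>
    intro E hE0 hE hV
    rw [Finset.sum_range_succ]
    rcases Nat.eq_zero_or_pos n with hn | hn
    · subst hn; simp [hE0]
    · have h1 : E n * V (n - 1) ≤ ∑ i ∈ Finset.range n, (E (i + 1) - E i) * V i :=
        ih E hE0 (fun i hi => hE i (le_trans hi (Nat.le_succ n)))
          (fun i hi => hV i (Nat.lt_succ_of_lt hi))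
      have hVn : V n ≤ V (n - 1) := by
        have := hV (n - 1) (by omega)
        rwa [Nat.sub_add_cancel hn] at this
      have hEn : 0 ≤ E n := hE n (Nat.le_succ n)
      have h2 : E (n + 1) * V n ≤ E n * V (n - 1) + (E (n + 1) - E n) * V n := by nlinarith
      simp only [Nat.add_sub_cancel]
      linarith

theorem greedy_adversary_is_optimal
    (n : ℕ) (Pl Ph V : ℕ → ℝ)
    (h0 : ∀ i < n, 0 ≤ Pl i) (h1 : ∀ i < n, Ph i ≤ 1) (hle : ∀ i < n, Pl i ≤ Ph i)
    (hsuml : ∑ i ∈ Finset.range n, Pl i ≤ 1) (hsumu : 1 ≤ ∑ i ∈ Finset.range n, Ph i)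
    (hV : ∀ i < n, 0 ≤ V i ∧ V i ≤ 1)
    (hsort : ∀ i j, i ≤ j → j < n → V j ≤ V i) :
    ((∀ i < n, Pl i ≤ greedyDist Ph Pl n i ∧ greedyDist Ph Pl n i ≤ Ph i) ∧
        ∑ i ∈ Finset.range n, greedyDist Ph Pl n i = 1) ∧
      ∀ d : ℕ → ℝ, (∀ i < n, Pl i ≤ d i ∧ d i ≤ Ph i) →
        ∑ i ∈ Finset.range n, d i = 1 →
        ∑ i ∈ Finset.range n, d i * V i ≤
          ∑ i ∈ Finset.range n, greedyDist Ph Pl n i * V i := by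
  set C := greedyCum Ph Pl n with hCdef
  have hC0 : C 0 = 0 := rfl
  have hCsucc : ∀ i, C (i + 1) =
      C i + min (Ph i) (1 - C i - ∑ j ∈ Finset.Ico (i + 1) n, Pl j) := fun i => rfl
  -- sum split for Pl over Ico
  have hTsplit : ∀ i, i < n →
      (∑ j ∈ Finset.Ico i n, Pl j) = Pl i + ∑ j ∈ Finset.Ico (i + 1) n, Pl j :=
    fun i hi => Finset.sum_eq_sum_Ico_succ_bot hi Pl
  -- key invariants
  have key : ∀ i, i ≤ n →
      C i + (∑ j ∈ Finset.Ico i n, Pl j) ≤ 1 ∧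
      1 - (∑ j ∈ Finset.Ico i n, Ph j) ≤ C i := by
    intro i
    induction i with
    | zero =>
      intro _
      constructor
      · rw [hC0, ← Finset.range_eq_Ico]; linarith
      · rw [← Finset.range_eq_Ico, hC0]; linarith
    | succ i ih =>
      intro hi
      have hin : i < n := hi
      obtain ⟨ih1, ih2⟩ := ih (le_of_lt hin)
      constructor
      · have : C (i + 1) ≤ 1 - ∑ j ∈ Finset.Ico (i + 1) n, Pl j := by
          rw [hCsucc i]
          have := min_le_right (Ph i) (1 - C i - ∑ j ∈ Finset.Ico (i + 1) n, Pl j)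
          linarith
        linarith
      · have hUsplit : (∑ j ∈ Finset.Ico i n, Ph j)
            = Ph i + ∑ j ∈ Finset.Ico (i + 1) n, Ph j :=
          Finset.sum_eq_sum_Ico_succ_bot hin Ph
        have hPlPh : (∑ j ∈ Finset.Ico (i + 1) n, Pl j) ≤
            ∑ j ∈ Finset.Ico (i + 1) n, Ph j := by
          apply Finset.sum_le_sum
          intro j hj
          exact hle j (Finset.mem_Ico.mp hj).2
        rw [hCsucc i]
        rcases min_cases (Ph i) (1 - C i - ∑ j ∈ Finset.Ico (i + 1) n, Pl j) with
          ⟨hmin, _⟩ | ⟨hmin, _⟩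
        · rw [hmin]; rw [hUsplit] at ih2; linarith
        · rw [hmin]; linarith
  -- feasibility of greedyDist
  have hfeas : ∀ i < n, Pl i ≤ greedyDist Ph Pl n i ∧ greedyDist Ph Pl n i ≤ Ph i := by
    intro i hi
    have hkey := (key i (le_of_lt hi)).1
    rw [hTsplit i hi] at hkey
    have hD : greedyDist Ph Pl n i =
        min (Ph i) (1 - C i - ∑ j ∈ Finset.Ico (i + 1) n, Pl j) := by
      unfold greedyDist
      rw [← hCdef, hCsucc i]; ring
    constructor
    · rw [hD]
      exact le_min (hle i hi) (by linarith)
    · rw [hD]; exact min_le_left _ _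
  -- total mass is 1
  have hCn : C n = 1 := by
    have h := key n le_rfl
    simp only [Finset.Ico_self, Finset.sum_empty] at h
    linarith [h.1, h.2]
  have hsum1 : ∑ i ∈ Finset.range n, greedyDist Ph Pl n i = 1 := by
    have : ∑ i ∈ Finset.range n, (C (i + 1) - C i) = C n - C 0 :=
      Finset.sum_range_sub C n
    simpa [greedyDist, ← hCdef, hC0, hCn] using this
  refine ⟨⟨hfeas, hsum1⟩, ?_⟩
  -- optimality
  intro d hd hdsum
  set D : ℕ → ℝ := fun k => ∑ i ∈ Finset.range k, d i with hDdef
  have hDle : ∀ k, k ≤ n → D k ≤ C k := by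
    intro k
    induction k with
    | zero => intro _; simp [hDdef, hC0]
    | succ k ih =>
      intro hk
      have hkn : k < n := hk
      have ihk := ih (le_of_lt hkn)
      have hDsucc : D (k + 1) = D k + d k := Finset.sum_range_succ d k
      rw [hCsucc k]
      rcases min_cases (Ph k) (1 - C k - ∑ j ∈ Finset.Ico (k + 1) n, Pl j) with
        ⟨hmin, _⟩ | ⟨hmin, _⟩
      · rw [hmin, hDsucc]
        have := (hd k hkn).2
        linarith
      · rw [hmin]
        -- D (k+1) + ∑_{Ico (k+1) n} Pl ≤ D (k+1) + ∑_{Ico (k+1) n} d = 1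
        have hsplit : D (k + 1) + (∑ j ∈ Finset.Ico (k + 1) n, d j) = 1 := by
          rw [← hdsum, Finset.range_eq_Ico, hDdef]
          simp only [Finset.range_eq_Ico]
          exact Finset.sum_Ico_consecutive d (Nat.zero_le (k + 1)) hk
        have hPld : (∑ j ∈ Finset.Ico (k + 1) n, Pl j) ≤
            ∑ j ∈ Finset.Ico (k + 1) n, d j := by
          apply Finset.sum_le_sum
          intro j hj
          exact (hd j (Finset.mem_Ico.mp hj).2).1
        linarith
  set E : ℕ → ℝ := fun k => C k - D k with hEdef
  have hE0 : E 0 = 0 := by simp [hEdef, hC0, hDdef]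
  have hEn : E n = 0 := by
    have : D n = 1 := by simpa [hDdef] using hdsum
    simp [hEdef, hCn, this]
  have hEpos : ∀ i, i ≤ n → 0 ≤ E i := fun i hi => sub_nonneg.mpr (hDle i hi)
  have habel := abel_sum V n E hE0 hEpos
    (fun i hi => hsort i (i + 1) (Nat.le_succ i) hi)
  rw [hEn, zero_mul] at habel
  have heq : ∑ i ∈ Finset.range n, (E (i + 1) - E i) * V i =
      ∑ i ∈ Finset.range n, greedyDist Ph Pl n i * V i
      - ∑ i ∈ Finset.range n, d i * V i := by
    rw [← Finset.sum_sub_distrib]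
    apply Finset.sum_congr rfl
    intro i _
    have : E (i + 1) - E i = greedyDist Ph Pl n i - d i := by
      simp only [hEdef, greedyDist, ← hCdef, hDdef, Finset.sum_range_succ]
      ring
    rw [this]; ring
  linarith [heq ▸ habel]
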